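/- Let G be a finite group and Ω : G × G → ℂˣ a 2-cocycle. Then Ω is cohomologous to a 2-cocycle taking values in the group μ_{|G|} of |G|-th roots of unity: there exists β : G → ℂˣ such that Ω'(g,h) := Ω(g,h)·β(g)β(h)/β(gh) satisfies Ω'(g,h)^{|G|} = 1 for all g,h ∈ G. -/

import Mathlib

/-- Any 2-cocycle on a finite group is cohomologous to one valued in the `|G|`-th
roots of unity. -/
theorem cocycle_cohomologous_to_roots_of_unity
    {G : Type*} [Group G] [Fintype G]
    (Ω : G → G → ℂˣ)
    (hΩ : ∀ g h k : G, Ω g h * Ω (g * h) k = Ω g (h * k) * Ω h k) :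
    ∃ β : G → ℂˣ, ∀ g h : G,
      (Ω g h * β g * β h * (β (g * h))⁻¹) ^ (Fintype.card G) = 1 := by
  classical
  set n := Fintype.card G with hn
  have hnpos : 0 < n := Fintype.card_pos
  set f : G → ℂˣ := fun g => ∏ k, Ω g k with hf
  have key : ∀ g h : G, (Ω g h) ^ n = f g * f h * (f (g * h))⁻¹ := by
    intro g h
    have h1 : ∏ k, (Ω g h * Ω (g * h) k) = ∏ k, (Ω g (h * k) * Ω h k) := by
      exact Finset.prod_congr rfl fun k _ => hΩ g h k
    have h2 : ∏ k, (Ω g h * Ω (g * h) k) = (Ω g h) ^ n * f (g * h) := by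
      rw [Finset.prod_mul_distrib, Finset.prod_const, Finset.card_univ]
    have h3 : ∏ k, (Ω g (h * k) * Ω h k) = f g * f h := by
      rw [Finset.prod_mul_distrib]
      congr 1
      exact Fintype.prod_equiv (Equiv.mulLeft h) _ _ (fun k => rfl)
    rw [h2, h3] at h1
    rw [eq_mul_inv_iff_mul_eq]
    exact h1
  -- choose n-th roots of (f g)⁻¹
  have hroot : ∀ g : G, ∃ b : ℂˣ, b ^ n = (f g)⁻¹ := by
    intro g
    obtain ⟨z, hz⟩ := IsAlgClosed.exists_pow_nat_eq (((f g)⁻¹ : ℂˣ) : ℂ) hnpos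
    have hz0 : z ≠ 0 := by
      intro h; rw [h, zero_pow hnpos.ne'] at hz
      exact (Units.ne_zero _) hz.symm
    refine ⟨Units.mk0 z hz0, ?_⟩
    ext
    simpa using hz
  choose β hβ using hroot
  refine ⟨β, fun g h => ?_⟩
  have : (Ω g h * β g * β h * (β (g * h))⁻¹) ^ n
      = (Ω g h) ^ n * (β g) ^ n * (β h) ^ n * ((β (g * h)) ^ n)⁻¹ := by
    rw [mul_pow, mul_pow, mul_pow, inv_pow]
  rw [this, key, hβ, hβ, hβ]
  have comm : ∀ a b c : ℂˣ, a * b * c⁻¹ * a⁻¹ * b⁻¹ * (c⁻¹)⁻¹ = 1 := by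
    intro a b c
    ext
    simp only [Units.val_mul, Units.val_inv_eq_inv_val, inv_inv, Units.val_one]
    field_simp
  exact comm _ _ _
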